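/- arXiv:2208.07199 — 3 statements merged into one kernel-verified Lean document; each statement's English description precedes it below -/
import Mathlib

section
/- Let G be a connected split graph with partition (K, S), and let I be a distance-3 independent set of G with |I| ≥ 2. Then for every x ∈ I and every neighbor y of x with y ∉ I, the set (I \ {x}) ∪ {y} is not a distance-3 independent set of G. (That is, no token-slide is possible from any distance-3 independent set of size at least 2 in a connected split graph.) -/
def DdIS {V : Type*} (G : SimpleGraph V) (d : ℕ) (I : Set V) : Prop :=
  ∀ u ∈ I, ∀ v ∈ I, u ≠ v → (d : ℕ∞) ≤ G.edist u v

theorem stmt5 {V : Type*} (G : SimpleGraph V) (K S : Set V)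
    (hcover : ∀ x : V, x ∈ K ∨ x ∈ S) (hdisj : ∀ x : V, ¬(x ∈ K ∧ x ∈ S))
    (hK : ∀ a ∈ K, ∀ b ∈ K, a ≠ b → G.Adj a b)
    (hS : ∀ a ∈ S, ∀ b ∈ S, ¬ G.Adj a b)
    (hconn : G.Connected)
    (I : Set V) (hI : DdIS G 3 I) (hcard : I.Nontrivial) :
    ∀ x ∈ I, ∀ y, G.Adj x y → y ∉ I → ¬ DdIS G 3 ((I \ {x}) ∪ {y}) := by
  intro x hx y hxy hyI hI'
  -- existence of neighbors for vertices with another distinct vertex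
  have hnbr : ∀ v u : V, u ≠ v → ∃ w, G.Adj v w := by
    intro v u huv
    obtain ⟨p⟩ := hconn.preconnected v u
    cases p with
    | nil => exact absurd rfl huv.symm
    | cons h _ => exact ⟨_, h⟩
  -- any other element of I distinct from a given one
  have hother : ∀ u : V, ∃ v ∈ I, v ≠ u := by
    intro u
    obtain ⟨a, ha, b, hb, hab⟩ := hcard
    by_cases h : a = u
    · exact ⟨b, hb, by rintro rfl; exact hab h⟩
    · exact ⟨a, ha, h⟩
  -- all of I lies in S
  have hIS : ∀ u ∈ I, u ∈ S := by
    intro u hu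
    rcases hcover u with huK | huS
    · exfalso
      obtain ⟨v, hvI, hvu⟩ := hother u
      have hd := hI u hu v hvI hvu.symm
      have h2 : G.edist u v ≤ 2 := by
        rcases hcover v with hvK | hvS
        · have hadj : G.Adj u v := hK u huK v hvK hvu.symm
          calc G.edist u v = 1 := (SimpleGraph.edist_eq_one_iff_adj).2 hadj
            _ ≤ 2 := by norm_num
        · obtain ⟨w, hw⟩ := hnbr v u hvu.symm
          have hwK : w ∈ K := by
            rcases hcover w with h | h
            · exact h
            · exact absurd hw (hS v hvS w h)
          by_cases hwu : w = u
          · have hadj : G.Adj u v := hwu ▸ hw.symm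
            calc G.edist u v = 1 :=
                (SimpleGraph.edist_eq_one_iff_adj).2 hadj
              _ ≤ 2 := by norm_num
          · have h1 : G.edist u w = 1 :=
              (SimpleGraph.edist_eq_one_iff_adj).2 (hK u huK w hwK (Ne.symm hwu))
            have h2 : G.edist w v = 1 :=
              (SimpleGraph.edist_eq_one_iff_adj).2 hw.symm
            calc G.edist u v ≤ G.edist u w + G.edist w v := G.edist_triangle
              _ = 2 := by rw [h1, h2]; rfl
      have : (3 : ℕ∞) ≤ 2 := le_trans hd h2
      norm_num at this
    · exact huS
  have hxS : x ∈ S := hIS x hx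
  have hyK : y ∈ K := by
    rcases hcover y with h | h
    · exact h
    · exact absurd hxy (hS x hxS y h)
  obtain ⟨z, hzI, hzx⟩ := hother x
  have hzS : z ∈ S := hIS z hzI
  obtain ⟨w, hw⟩ := hnbr z x hzx.symm
  have hwK : w ∈ K := by
    rcases hcover w with h | h
    · exact h
    · exact absurd hw (hS z hzS w h)
  have hdyz : G.edist y z ≤ 2 := by
    by_cases hwy : w = y
    · subst hwy
      calc G.edist w z = 1 := (SimpleGraph.edist_eq_one_iff_adj).2 hw.symm
        _ ≤ 2 := by norm_num
    · have h1 : G.edist y w = 1 :=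
        (SimpleGraph.edist_eq_one_iff_adj).2 (hK y hyK w hwK (Ne.symm hwy))
      have h2 : G.edist w z = 1 :=
        (SimpleGraph.edist_eq_one_iff_adj).2 hw.symm
      calc G.edist y z ≤ G.edist y w + G.edist w z := G.edist_triangle
        _ = 2 := by rw [h1, h2]; rfl
  have hyz : y ≠ z := fun h => hyI (h ▸ hzI)
  have hd := hI' y (Or.inr rfl) z (Or.inl ⟨hzI, hzx⟩) hyz
  have : (3 : ℕ∞) ≤ 2 := le_trans hd hdyz
  norm_num at this
end

section
/- Let T be a tree, d ≥ 2, I a distance-d independent set of T, and u ∈ I with |V(T)| ≥ 2. If for some neighbor v of u, every vertex w ∈ I with dist_T(v,w) = d−1 and w ≠ u admits a slide within its subtree (i.e., some neighbor w' of w in the subtree T^v_w away from v with (I ∩ V(T^v_w) \ {w}) ∪ {w'} a distance-d independent set of T^v_w), and these subtrees T^v_w are pairwise vertex-disjoint, then after performing one such slide in each subtree, (I' \ {u}) ∪ {v} is a distance-d independent set of T, where I' is the resulting set. In particular, the subtrees T^v_w for distinct w ∈ I ∩ N^{d−1}_T(v) \ {u} are pairwise disjoint. -/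
/-- In a tree rooted at `v`, the subtree `T^v_w` consists of `w` and its descendants,
i.e. the vertices whose path to `v` passes through `w`. -/
def subtreeSet {V : Type*} (T : SimpleGraph V) (v w : V) : Set V :=
  {x | T.dist v x = T.dist v w + T.dist w x}

section helpers

variable {V : Type*} [DecidableEq V] {T : SimpleGraph V}

/-- In a tree, the support of any path is contained in the support of any walk
with the same endpoints. -/
lemma tree_path_support_subset (hT : T.IsTree) {a x : V} (p q : T.Walk a x)
    (hp : p.IsPath) : p.support ⊆ q.support := by
  have : p = q.bypass := by
    have := hT.IsAcyclic.path_unique ⟨p, hp⟩ ⟨q.bypass, q.bypass_isPath⟩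
    simpa using congrArg Subtype.val this
  rw [this]
  exact q.support_bypass_subset

lemma tree_mem_support_of_dist (hT : T.IsTree) {a x w : V}
    (h : T.dist a w + T.dist w x = T.dist a x) (q : T.Walk a x) :
    w ∈ q.support := by
  obtain ⟨p1, hp1⟩ := (hT.isConnected a w).exists_walk_length_eq_dist
  obtain ⟨p2, hp2⟩ := (hT.isConnected w x).exists_walk_length_eq_dist
  have hlen : (p1.append p2).length = T.dist a x := by
    rw [SimpleGraph.Walk.length_append, hp1, hp2, h]
  have hpath := (p1.append p2).isPath_of_length_eq_dist hlen
  have hw : w ∈ (p1.append p2).support := by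
    rw [SimpleGraph.Walk.mem_support_append_iff]
    left; exact p1.end_mem_support
  exact tree_path_support_subset hT _ q hpath hw

lemma dist_add_of_mem_support (hT : T.IsTree) {a x w : V} (q : T.Walk a x)
    (hq : q.length = T.dist a x) (hw : w ∈ q.support) :
    T.dist a w + T.dist w x = T.dist a x := by
  have h1 : T.dist a w ≤ (q.takeUntil w hw).length := SimpleGraph.dist_le _
  have h2 : T.dist w x ≤ (q.dropUntil w hw).length := SimpleGraph.dist_le _
  have h3 : (q.takeUntil w hw).length + (q.dropUntil w hw).length = q.length := by
    rw [← SimpleGraph.Walk.length_append, q.take_spec hw]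
  have h4 := hT.isConnected.dist_triangle (u := a) (v := w) (w := x)
  omega

/-- Key geometric lemma: if `x` is in the subtree at `w` (rooted at `v`) and `a` is not,
then the path from `a` to `x` passes through `w`. -/
lemma tree_dist_through (hT : T.IsTree) {v w a x : V}
    (hx : T.dist v x = T.dist v w + T.dist w x)
    (ha : ¬ (T.dist v a = T.dist v w + T.dist w a)) :
    T.dist a x = T.dist a w + T.dist w x := by
  obtain ⟨pax, hpax⟩ := (hT.isConnected a x).exists_walk_length_eq_dist
  obtain ⟨pva, hpva⟩ := (hT.isConnected v a).exists_walk_length_eq_dist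
  have hwax : w ∈ pax.support := by
    by_contra hnot
    have hwva : w ∉ pva.support := fun hmem =>
      ha (dist_add_of_mem_support hT pva hpva hmem).symm
    have : w ∈ (pva.append pax).support :=
      tree_mem_support_of_dist hT hx.symm (pva.append pax)
    rw [SimpleGraph.Walk.mem_support_append_iff] at this
    tauto
  exact (dist_add_of_mem_support hT pax hpax hwax).symm

omit [DecidableEq V] in
lemma edist_eq_dist_of_connected (hc : T.Connected) (x y : V) :
    T.edist x y = (T.dist x y : ℕ∞) := by
  have h : T.edist x y ≠ ⊤ := SimpleGraph.edist_ne_top_iff_reachable.mpr (hc x y)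
  rw [SimpleGraph.dist, ENat.coe_toNat h]

end helpers

theorem stmt16 {V : Type*} (T : SimpleGraph V) (hT : T.IsTree) (d : ℕ) (hd : 2 ≤ d)
    (I : Set V) (hI : DdIS T d I) (u : V) (hu : u ∈ I) (v : V) (hadj : T.Adj u v)
    (g : V → V)
    (hg : ∀ w ∈ I, w ≠ u → T.dist v w = d - 1 →
      g w ∈ subtreeSet T v w ∧ T.Adj w (g w) ∧
        DdIS T d (((I ∩ subtreeSet T v w) \ {w}) ∪ {g w})) :
    (∀ w ∈ I, ∀ w' ∈ I, w ≠ u → w' ≠ u → T.dist v w = d - 1 → T.dist v w' = d - 1 →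
        w ≠ w' → Disjoint (subtreeSet T v w) (subtreeSet T v w')) ∧
      DdIS T d
        (((((I \ {w | w ∈ I ∧ w ≠ u ∧ T.dist v w = d - 1}) ∪
            g '' {w | w ∈ I ∧ w ≠ u ∧ T.dist v w = d - 1}) \ {u}) ∪ {v})) := by
  classical
  have hc := hT.isConnected
  have hde : ∀ x y : V, d ≤ T.dist x y → (d : ℕ∞) ≤ T.edist x y := by
    intro x y h
    rw [edist_eq_dist_of_connected hc]
    exact_mod_cast h
  have hed : ∀ x y : V, (d : ℕ∞) ≤ T.edist x y → d ≤ T.dist x y := by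
    intro x y h
    rw [edist_eq_dist_of_connected hc] at h
    exact_mod_cast h
  have hIdist : ∀ a ∈ I, ∀ b ∈ I, a ≠ b → d ≤ T.dist a b := fun a ha b hb hab =>
    hed a b (hI a ha b hb hab)
  have huv : T.dist u v = 1 := SimpleGraph.dist_eq_one_iff_adj.mpr hadj
  -- first part: disjointness
  have hdisj : ∀ w ∈ I, ∀ w' ∈ I, w ≠ u → w' ≠ u → T.dist v w = d - 1 →
      T.dist v w' = d - 1 → w ≠ w' → Disjoint (subtreeSet T v w) (subtreeSet T v w') := by
    intro w hw w' hw' hwu hw'u hdw hdw' hne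
    rw [Set.disjoint_left]
    intro x hxw hxw'
    have hxw : T.dist v x = T.dist v w + T.dist w x := hxw
    have hxw' : T.dist v x = T.dist v w' + T.dist w' x := hxw'
    by_cases hin : T.dist v w' = T.dist v w + T.dist w w'
    · have : T.dist w w' = 0 := by omega
      exact hne (hc.dist_eq_zero_iff.mp this)
    · have h1 : T.dist w' x = T.dist w' w + T.dist w x := tree_dist_through hT hxw hin
      have h2 : T.dist w' w = 0 := by omega
      exact hne ((hc.dist_eq_zero_iff.mp h2).symm)
  refine ⟨hdisj, ?_⟩
  -- notation for membership in S
  set S : Set V := {w | w ∈ I ∧ w ≠ u ∧ T.dist v w = d - 1} with hS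
  -- facts about slid vertices
  have hgw : ∀ w ∈ S, T.dist v (g w) = d ∧ T.dist w (g w) = 1 := by
    intro w hw
    obtain ⟨hw1, hw2, hw3⟩ := hw
    obtain ⟨hsub, hadjw, _⟩ := hg w hw1 hw2 hw3
    have h1 : T.dist w (g w) = 1 := SimpleGraph.dist_eq_one_iff_adj.mpr hadjw
    have h2 : T.dist v (g w) = T.dist v w + T.dist w (g w) := hsub
    constructor
    · rw [h2, h1, hw3]; omega
    · exact h1
  have claim_vA : ∀ a ∈ I, a ≠ u → T.dist v a ≠ d - 1 → d ≤ T.dist v a := by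
    intro a ha hau hda
    have h1 : d ≤ T.dist u a := hIdist u hu a ha (Ne.symm hau)
    have h2 : T.dist u a ≤ T.dist u v + T.dist v a := hc.dist_triangle
    omega
  have claim_AB : ∀ a ∈ I, a ≠ u → T.dist v a ≠ d - 1 → ∀ w ∈ S, a ≠ g w →
      d ≤ T.dist a (g w) := by
    intro a ha hau hda w hw hagw
    obtain ⟨hw1, hw2, hw3⟩ := hw
    obtain ⟨hsub, hadjw, hDd⟩ := hg w hw1 hw2 hw3
    have haw : a ≠ w := by
      intro h; rw [h] at hda; exact hda hw3
    by_cases hin : T.dist v a = T.dist v w + T.dist w a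
    · -- a is in the subtree; use the DdIS property of the slid set
      have hmem : a ∈ ((I ∩ subtreeSet T v w) \ {w}) ∪ {g w} :=
        Or.inl ⟨⟨ha, hin⟩, haw⟩
      have hmem' : g w ∈ ((I ∩ subtreeSet T v w) \ {w}) ∪ {g w} := Or.inr rfl
      exact hed a (g w) (hDd a hmem (g w) hmem' hagw)
    · have h1 : T.dist a (g w) = T.dist a w + T.dist w (g w) :=
        tree_dist_through hT hsub hin
      have h2 : T.dist w (g w) = 1 := SimpleGraph.dist_eq_one_iff_adj.mpr hadjw
      have h3 : d ≤ T.dist a w := hIdist a ha w hw1 haw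
      omega
  have claim_BB : ∀ w ∈ S, ∀ w' ∈ S, w ≠ w' → d ≤ T.dist (g w) (g w') := by
    intro w hw w' hw' hne
    obtain ⟨hw1, hw2, hw3⟩ := hw
    obtain ⟨hw'1, hw'2, hw'3⟩ := hw'
    obtain ⟨hsub, hadjw, _⟩ := hg w hw1 hw2 hw3
    obtain ⟨hsub', hadjw', _⟩ := hg w' hw'1 hw'2 hw'3
    have hdj := hdisj w hw1 w' hw'1 hw2 hw'2 hw3 hw'3 hne
    have hgw'ns : ¬ (T.dist v (g w') = T.dist v w + T.dist w (g w')) := by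
      intro h
      exact (Set.disjoint_left.mp hdj h) hsub'
    have h1 : T.dist (g w') (g w) = T.dist (g w') w + T.dist w (g w) :=
      tree_dist_through hT hsub hgw'ns
    have h2 : T.dist w (g w) = 1 := SimpleGraph.dist_eq_one_iff_adj.mpr hadjw
    have h2' : T.dist w' (g w') = 1 := SimpleGraph.dist_eq_one_iff_adj.mpr hadjw'
    have h3 : d ≤ T.dist w w' := hIdist w hw1 w' hw'1 hne
    have h4 : T.dist w w' ≤ T.dist w (g w') + T.dist (g w') w' := hc.dist_triangle
    rw [SimpleGraph.dist_comm] at h1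
    have h5 : T.dist w (g w') = T.dist (g w') w := SimpleGraph.dist_comm ..
    have h6 : T.dist (g w') w' = T.dist w' (g w') := SimpleGraph.dist_comm ..
    omega
  -- now the main DdIS claim
  intro x hx y hy hxy
  apply hde
  have hmem : ∀ z, z ∈ (((I \ S) ∪ g '' S) \ {u}) ∪ ({v} : Set V) →
      z = v ∨ (z ∈ I ∧ z ≠ u ∧ T.dist v z ≠ d - 1) ∨ (∃ w ∈ S, g w = z) := by
    intro z hz
    rcases hz with hz | hz
    · rcases hz with ⟨hz1, hz2⟩
      rcases hz1 with ⟨hzI, hzS⟩ | hzg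
      · have hz2' : z ≠ u := hz2
        refine Or.inr (Or.inl ⟨hzI, hz2', ?_⟩)
        intro h
        exact hzS ⟨hzI, hz2', h⟩
      · exact Or.inr (Or.inr hzg)
    · exact Or.inl hz
  rcases hmem x hx with hxv | hxA | ⟨w, hwS, hgwx⟩ <;>
    rcases hmem y hy with hyv | hyA | ⟨w', hw'S, hgw'y⟩
  · exact absurd (hxv.trans hyv.symm) hxy
  · subst hxv
    exact claim_vA y hyA.1 hyA.2.1 hyA.2.2
  · subst hxv; subst hgw'y
    exact le_of_eq (hgw w' hw'S).1.symm
  · subst hyv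
    rw [SimpleGraph.dist_comm]
    exact claim_vA x hxA.1 hxA.2.1 hxA.2.2
  · exact hIdist x hxA.1 y hyA.1 hxy
  · subst hgw'y
    exact claim_AB x hxA.1 hxA.2.1 hxA.2.2 w' hw'S hxy
  · subst hyv; subst hgwx
    rw [SimpleGraph.dist_comm]
    exact le_of_eq (hgw w hwS).1.symm
  · subst hgwx
    rw [SimpleGraph.dist_comm]
    exact claim_AB y hyA.1 hyA.2.1 hyA.2.2 w hwS (Ne.symm hxy)
  · subst hgwx; subst hgw'y
    have hww' : w ≠ w' := by
      intro h; rw [h] at hxy; exact hxy rfl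
    exact claim_BB w hwS w' hw'S hww'
end

section
/- Let G consist of k ≥ 2 disjoint paths P_1,…,P_k each of length d−1 (d ≥ 3) with endpoints v_i, w_i, where v_i^* (resp. w_i^*) is the neighbor of v_i (resp. w_i) on P_i, together with, for each ordered pair (i,j) with i ≠ j, an internally disjoint path Q_{v_i^*, v_j} of length d−1 joining v_i^* and v_j, and similarly Q_{w_i^*, w_j} joining w_i^* and w_j. Then I = {v_1,…,v_k} is a distance-d independent set of G: for all i ≠ j, dist_G(v_i, v_j) ≥ d. -/
private def fAux (k d : ℕ) (i : Fin k) :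
    ((Fin k × Fin d) ⊕ (Bool × Fin k × Fin k × Fin (d - 2))) → ℕ
  | Sum.inl (m, a) => if m = i then (a : ℕ) else if (a : ℕ) = 1 then d - 1 else d
  | Sum.inr (true, m, n, t) =>
      if n = i then d - 2 - (t : ℕ) else if m = i then (t : ℕ) + 2 else d
  | Sum.inr (false, m, _, t) => if m = i ∧ (t : ℕ) = 0 then d - 1 else d

set_option maxHeartbeats 1000000 in
/-- The gadget graph: `k` disjoint paths `P_i` of length `d-1` (vertices `Sum.inl (i, a)`,
`a = 0, …, d-1`, with `v_i = (i,0)`, `v_i^* = (i,1)`, `w_i^* = (i,d-2)`, `w_i = (i,d-1)`),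
together with, for every ordered pair `(i,j)` with `i ≠ j`, a connector path of length `d-1`
from `v_i^*` to `v_j` with internal vertices `Sum.inr (true, i, j, t)` (`t = 0, …, d-3`),
and a connector path of length `d-1` from `w_i^*` to `w_j` with internal vertices
`Sum.inr (false, i, j, t)`. Then `{v_1, …, v_k}` is a distance-`d` independent set. -/
theorem stmt18 (k d : ℕ) (hk : 2 ≤ k) (hd : 3 ≤ d)
    (G : SimpleGraph ((Fin k × Fin d) ⊕ (Bool × Fin k × Fin k × Fin (d - 2))))
    (hG : G = SimpleGraph.fromRel (fun x y =>
      match x, y with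
      | Sum.inl (i, a), Sum.inl (j, b) => i = j ∧ (b : ℕ) = (a : ℕ) + 1
      | Sum.inl (i, a), Sum.inr (top, i', j', t) =>
          i' ≠ j' ∧
          ((i = i' ∧ (t : ℕ) = 0 ∧
              ((top = true ∧ (a : ℕ) = 1) ∨ (top = false ∧ (a : ℕ) = d - 2))) ∨
           (i = j' ∧ (t : ℕ) = d - 3 ∧
              ((top = true ∧ (a : ℕ) = 0) ∨ (top = false ∧ (a : ℕ) = d - 1))))
      | Sum.inr _, Sum.inl _ => False
      | Sum.inr (top, i, j, t), Sum.inr (top', i', j', t') =>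
          top = top' ∧ i = i' ∧ j = j' ∧ i ≠ j ∧ (t' : ℕ) = (t : ℕ) + 1)) :
    ∀ i j : Fin k, i ≠ j →
      (d : ℕ∞) ≤ G.edist (Sum.inl (i, ⟨0, by omega⟩)) (Sum.inl (j, ⟨0, by omega⟩)) := by
  intro i j hij
  have hLip : ∀ x y, G.Adj x y → fAux k d i y ≤ fAux k d i x + 1 := by
    intro x y hxy
    rw [hG, SimpleGraph.fromRel_adj] at hxy
    obtain ⟨hne, h⟩ := hxy
    rcases x with ⟨m, a⟩ | ⟨(_|_), m, n, t⟩ <;>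
      rcases y with ⟨m', a'⟩ | ⟨(_|_), m', n', t'⟩ <;> simp only at h
    · -- inl inl
      have ha := a.isLt; have ha' := a'.isLt
      rcases h with ⟨hm, hb⟩ | ⟨hm, hb⟩ <;> subst hm <;>
        simp only [fAux] <;> split_ifs <;> omega
    · -- inl / inr false
      have ht' := t'.isLt
      rcases h with ⟨hmn, h⟩ | h
      · rcases h with ⟨hm, ht, ⟨htp, ha⟩ | ⟨htp, ha⟩⟩ | ⟨hm, ht, ⟨htp, ha⟩ | ⟨htp, ha⟩⟩ <;>
          first
          | (subst hm; simp only [fAux] <;> split_ifs <;>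
              first | omega | (subst_vars; omega) | simp_all)
          | simp_all
      · exact absurd h (by simp)
    · -- inl / inr true
      have ht' := t'.isLt
      rcases h with ⟨hmn, h⟩ | h
      · rcases h with ⟨hm, ht, ⟨htp, ha⟩ | ⟨htp, ha⟩⟩ | ⟨hm, ht, ⟨htp, ha⟩ | ⟨htp, ha⟩⟩ <;>
          first
          | (subst hm; simp only [fAux] <;> split_ifs <;>
              first | omega | (subst_vars; omega) | simp_all)
          | simp_all
      · exact absurd h (by simp)
    · -- inr false / inl
      have ht := t.isLt
      rcases h with h | ⟨hmn, h⟩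
      · exact absurd h (by simp)
      · rcases h with ⟨hm, hT, ⟨htp, ha⟩ | ⟨htp, ha⟩⟩ | ⟨hm, hT, ⟨htp, ha⟩ | ⟨htp, ha⟩⟩ <;>
          first
          | (subst hm; simp only [fAux] <;> split_ifs <;>
              first | omega | (subst_vars; omega) | simp_all)
          | simp_all
    · -- inr false / inr false
      have ht := t.isLt; have ht' := t'.isLt
      rcases h with ⟨h1, h2, h3, h4, h5⟩ | ⟨h1, h2, h3, h4, h5⟩ <;>
        subst h2 <;> subst h3 <;>
        simp only [fAux] <;> split_ifs <;>
          first | omega | (subst_vars; omega) | simp_all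
    · -- inr false / inr true (impossible)
      rcases h with ⟨h1, _⟩ | ⟨h1, _⟩ <;> simp_all
    · -- inr true / inl
      have ht := t.isLt
      rcases h with h | ⟨hmn, h⟩
      · exact absurd h (by simp)
      · rcases h with ⟨hm, hT, ⟨htp, ha⟩ | ⟨htp, ha⟩⟩ | ⟨hm, hT, ⟨htp, ha⟩ | ⟨htp, ha⟩⟩ <;>
          first
          | (subst hm; simp only [fAux] <;> split_ifs <;>
              first | omega | (subst_vars; omega) | simp_all)
          | simp_all
    · -- inr true / inr false (impossible)
      rcases h with ⟨h1, _⟩ | ⟨h1, _⟩ <;> simp_all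
    · -- inr true / inr true
      have ht := t.isLt; have ht' := t'.isLt
      rcases h with ⟨h1, h2, h3, h4, h5⟩ | ⟨h1, h2, h3, h4, h5⟩ <;>
        subst h2 <;> subst h3 <;>
        simp only [fAux] <;> split_ifs <;>
          first | omega | (subst_vars; omega) | simp_all
  have hwalk : ∀ (u v : _) (p : G.Walk u v), fAux k d i v ≤ fAux k d i u + p.length := by
    intro u v p
    induction p with
    | nil => simp
    | cons hadj p ih =>
      have := hLip _ _ hadj
      simp only [SimpleGraph.Walk.length_cons]
      omega
  refine le_sInf ?_
  rintro x ⟨p, rfl⟩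
  have h1 := hwalk _ _ p
  have h2 : fAux k d i (Sum.inl (i, ⟨0, by omega⟩)) = 0 := by simp [fAux]
  have h3 : fAux k d i (Sum.inl (j, ⟨0, by omega⟩)) = d := by
    simp [fAux, hij.symm]
  have : d ≤ p.length := by omega
  exact_mod_cast Nat.cast_le.mpr this
end
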